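/- Let f : ℕ → ℕ be a diagonal of an ℕ-rational generating function, and let g : ℕ → ℕ satisfy g(n) = f(n) for all n ≥ 1. Then g is also a diagonal of an ℕ-rational generating function. -/

import Mathlib

/-- The class `𝓡_k` of ℕ-rational generating functions in `k` variables: the smallest
class of power series in `ℕ[[x₁,…,x_k]]` containing `0` and the variables, closed under
addition and multiplication, and containing `1/(1-F)` (the unique solution `G` of
`G = 1 + F·G`) whenever it contains an `F` with zero constant term. -/
inductive NRational (k : ℕ) : MvPowerSeries (Fin k) ℕ → Prop
  | zero : NRational k 0
  | X : ∀ i : Fin k, NRational k (MvPowerSeries.X i)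
  | add : ∀ {F G}, NRational k F → NRational k G → NRational k (F + G)
  | mul : ∀ {F G}, NRational k F → NRational k G → NRational k (F * G)
  | geom : ∀ {F G}, NRational k F → MvPowerSeries.constantCoeff F = 0 →
      G = 1 + F * G → NRational k G

lemma nrat_one (k : ℕ) : NRational k 1 :=
  .geom .zero (by simp) (by ring)

lemma nrat_natCast (k c : ℕ) : NRational k (c : MvPowerSeries (Fin k) ℕ) := by
  induction c with
  | zero => simpa using NRational.zero
  | succ n ih => push_cast; exact .add ih (nrat_one k)

lemma nrat_decomp {k : ℕ} {F : MvPowerSeries (Fin k) ℕ} (h : NRational k F) :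
    ∃ (c : ℕ) (F₀ : MvPowerSeries (Fin k) ℕ), NRational k F₀ ∧
      MvPowerSeries.constantCoeff F₀ = 0 ∧
      F = (c : MvPowerSeries (Fin k) ℕ) + F₀ := by
  induction h with
  | zero => exact ⟨0, 0, .zero, by simp, by simp⟩
  | X i => exact ⟨0, _, .X i, by simp, by simp⟩
  | add hF hG ihF ihG =>
      obtain ⟨c, F₀, h1, h2, h3⟩ := ihF
      obtain ⟨d, G₀, h4, h5, h6⟩ := ihG
      exact ⟨c + d, F₀ + G₀, .add h1 h4, by simp [h2, h5], by
        rw [h3, h6]; push_cast; ring⟩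
  | mul hF hG ihF ihG =>
      obtain ⟨c, F₀, h1, h2, h3⟩ := ihF
      obtain ⟨d, G₀, h4, h5, h6⟩ := ihG
      refine ⟨c * d, (c : MvPowerSeries (Fin k) ℕ) * G₀ +
        (d : MvPowerSeries (Fin k) ℕ) * F₀ + F₀ * G₀,
        .add (.add (.mul (nrat_natCast k c) h4) (.mul (nrat_natCast k d) h1)) (.mul h1 h4),
        by simp [h2, h5], by rw [h3, h6]; push_cast; ring⟩
  | geom hF hc hG ih =>
      rename_i F' G'
      exact ⟨1, F' * G', .mul (by exact hF) (.geom hF hc hG),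
        by simp [map_mul, hc], by rw [Nat.cast_one]; exact hG⟩

/-- If `f` is a diagonal of an ℕ-rational generating function and `g` agrees with `f`
for all `n ≥ 1`, then `g` is also a diagonal of an ℕ-rational generating function. -/
theorem diagonal_of_eventually_eq (k : ℕ) (hk : 1 ≤ k)
    (F : MvPowerSeries (Fin k) ℕ) (hF : NRational k F) (f g : ℕ → ℕ)
    (hf : ∀ n : ℕ,
      f n = MvPowerSeries.coeff (Finsupp.equivFunOnFinite.symm fun _ => n) F)
    (hfg : ∀ n : ℕ, 1 ≤ n → g n = f n) :
    ∃ (l : ℕ) (G : MvPowerSeries (Fin l) ℕ), 1 ≤ l ∧ NRational l G ∧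
      ∀ n : ℕ,
        g n = MvPowerSeries.coeff (Finsupp.equivFunOnFinite.symm fun _ => n) G := by
  obtain ⟨c, F₀, h1, h2, h3⟩ := nrat_decomp hF
  refine ⟨k, (g 0 : MvPowerSeries (Fin k) ℕ) + F₀, hk,
    .add (nrat_natCast k (g 0)) h1, fun n => ?_⟩
  have i0 : Fin k := ⟨0, hk⟩
  have hcast : ∀ m : ℕ, (m : MvPowerSeries (Fin k) ℕ) = MvPowerSeries.C (σ := Fin k) (R := ℕ) m :=
    fun m => (map_natCast (MvPowerSeries.C (σ := Fin k) (R := ℕ)) m).symm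
  rcases Nat.eq_zero_or_pos n with hn | hn
  · subst hn
    have h0 : (Finsupp.equivFunOnFinite.symm fun _ : Fin k => (0:ℕ)) = 0 := by
      ext i; simp
    rw [h0, MvPowerSeries.coeff_zero_eq_constantCoeff_apply, map_add, h2, add_zero,
      map_natCast, Nat.cast_id]
  · have hne : (Finsupp.equivFunOnFinite.symm fun _ : Fin k => n) ≠ 0 := by
      intro h
      have := DFunLike.congr_fun h i0
      simp at this
      omega
    have key : ∀ m : ℕ,
        MvPowerSeries.coeff (Finsupp.equivFunOnFinite.symm fun _ : Fin k => n)
          ((m : MvPowerSeries (Fin k) ℕ) + F₀) =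
        MvPowerSeries.coeff (Finsupp.equivFunOnFinite.symm fun _ : Fin k => n) F₀ := by
      intro m
      rw [map_add, hcast, MvPowerSeries.coeff_C, if_neg hne, zero_add]
    rw [key, hfg n hn, hf n, h3, key]
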